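/- Work on the circle 𝕋 = ℝ/ℤ with Lebesgue (Haar) measure λ and open balls B(z,r). Let f_0(x) = 2x mod 1 and f_1(x) = 2x + 1/2 mod 1, and for a word ξ ∈ {0,1}^{k+1} write F_ξ^j = f_{ξ_j} ∘ ⋯ ∘ f_{ξ_1}. Then for every k ≥ 0, lim_{r→0⁺} [ Σ_{ξ ∈ {0,1}^{k+1}} 2^{−(k+1)} · λ( B(0,r) ∩ ⋂_{j=1}^{k} (F_ξ^j)^{-1}(B(0,r))ᶜ ∩ (F_ξ^{k+1})^{-1}(B(0,r)) ) ] / λ(B(0,r)) = 1/4^{k+1}. (These are the cluster coefficients q_k = 4^{−(k+1)} of the annealed Bernoulli(1/2,1/2) random system with b = 1/2, giving extremal index θ = 1 − Σ_{k≥0} 4^{−(k+1)} = 2/3.) -/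

import Mathlib

open MeasureTheory Set Filter Metric
open scoped ENNReal

/-- The random map on the circle: `dstep b false x = 2x mod 1`,
`dstep b true x = 2x + b mod 1`. -/
noncomputable def dstep (b : ℝ) : Bool → UnitAddCircle → UnitAddCircle
  | false, x => x + x
  | true, x => x + x + (b : UnitAddCircle)

/-- The concatenation `f_{ξ_j} ∘ ⋯ ∘ f_{ξ_1}` associated to the word
`l = [ξ_1, …, ξ_j]` (the first letter of the list is applied first). -/
noncomputable def wordMap (b : ℝ) (l : List Bool) (x : UnitAddCircle) : UnitAddCircle :=
  l.foldl (fun y s => dstep b s y) x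

/- ## Auxiliary lemmas -/

lemma lift_exists (x : UnitAddCircle) : ∃ t : ℝ, x = ↑t ∧ |t| ≤ 1/2 ∧ ‖x‖ = |t| := by
  set t : ℝ := (AddCircle.equivIco 1 (-(1/2)) x : ℝ) with ht
  have hmem := (AddCircle.equivIco 1 (-(1/2)) x).2
  simp only [mem_Ico, ← ht] at hmem
  have hx : ((t : ℝ) : UnitAddCircle) = x :=
    (AddCircle.equivIco 1 (-(1/2))).symm_apply_apply x
  have habs : |t| ≤ 1/2 := by rw [abs_le]; constructor <;> [linarith [hmem.1]; linarith [hmem.2]]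
  refine ⟨t, hx.symm, habs, ?_⟩
  rw [← hx, (AddCircle.norm_coe_eq_abs_iff (p := 1) one_ne_zero).2 (by simpa using habs)]

lemma nsmul_coe (n : ℕ) (t : ℝ) : (n • (↑t : UnitAddCircle)) = ((n * t : ℝ) : UnitAddCircle) := by
  rw [← AddCircle.coe_nsmul, nsmul_eq_mul]

lemma norm_half : ‖(((1:ℝ)/2 : ℝ) : UnitAddCircle)‖ = 1/2 := by
  rw [(AddCircle.norm_coe_eq_abs_iff (p := 1) one_ne_zero).2] <;>
    rw [abs_of_nonneg] <;> norm_num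

lemma half_add_half : (((1:ℝ)/2 : ℝ) : UnitAddCircle) + (((1:ℝ)/2 : ℝ) : UnitAddCircle) = 0 := by
  rw [← AddCircle.coe_add]; norm_num

noncomputable def cst (s : Bool) : UnitAddCircle :=
  if s then (((1:ℝ)/2 : ℝ) : UnitAddCircle) else 0

lemma cst_add_cst (s : Bool) : cst s + cst s = 0 := by
  cases s
  · simp [cst]
  · simpa [cst] using half_add_half

lemma wordMap_concat (b : ℝ) (l : List Bool) (s : Bool) (x : UnitAddCircle) :
    wordMap b (l ++ [s]) x = dstep b s (wordMap b l x) := by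
  simp [wordMap, List.foldl_append]

lemma dstep_eq (s : Bool) (y : UnitAddCircle) : dstep (1/2) s y = 2 • y + cst s := by
  cases s <;> simp [dstep, cst, two_nsmul]

lemma wordMap_eq (l : List Bool) (hl : l ≠ []) (x : UnitAddCircle) :
    wordMap (1/2) l x = (2 ^ l.length) • x + cst (l.getLastD false) := by
  induction l using List.reverseRecOn with
  | nil => exact absurd rfl hl
  | append_singleton l s ih =>
    rw [wordMap_concat, dstep_eq]
    rcases eq_or_ne l [] with rfl | hl'
    · simp [wordMap, pow_one]
    · rw [ih hl', smul_add, ← mul_nsmul']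
      have h2 : (2 : ℕ) • cst (l.getLastD false) = 0 := by
        rw [two_nsmul]; exact cst_add_cst _
      rw [h2]
      simp only [List.getLastD_concat, List.length_append, List.length_singleton,
        pow_succ, mul_comm, add_zero]

lemma take_len {k : ℕ} (ξ : Fin (k+1) → Bool) {j : ℕ} (h2 : j ≤ k+1) :
    ((List.ofFn ξ).take j).length = j := by
  simp [List.length_take, h2]

lemma take_ne_nil {k : ℕ} (ξ : Fin (k+1) → Bool) {j : ℕ} (h1 : 1 ≤ j) (h2 : j ≤ k+1) :
    (List.ofFn ξ).take j ≠ [] := by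
  intro h
  have hlen := take_len ξ h2
  rw [h] at hlen; simp at hlen; omega

lemma take_getLastD {k : ℕ} (ξ : Fin (k+1) → Bool) {j : ℕ} (h1 : 1 ≤ j) (h2 : j ≤ k+1) :
    ((List.ofFn ξ).take j).getLastD false = ξ ⟨j-1, by omega⟩ := by
  have hlen := take_len ξ h2
  rw [List.getLastD_eq_getLast?, List.getLast?_eq_getLast (take_ne_nil ξ h1 h2),
    Option.getD_some, List.getLast_eq_getElem]
  simp only [hlen]
  rw [List.getElem_take, List.getElem_ofFn]

lemma wordMap_take_eq {k : ℕ} (ξ : Fin (k+1) → Bool) {j : ℕ} (h1 : 1 ≤ j) (h2 : j ≤ k+1)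
    (x : UnitAddCircle) :
    wordMap (1/2) ((List.ofFn ξ).take j) x = (2 ^ j) • x + cst (ξ ⟨j-1, by omega⟩) := by
  rw [wordMap_eq _ (take_ne_nil ξ h1 h2), take_len ξ h2, take_getLastD ξ h1 h2]

lemma wordMap_full_eq {k : ℕ} (ξ : Fin (k+1) → Bool) (x : UnitAddCircle) :
    wordMap (1/2) (List.ofFn ξ) x = (2 ^ (k+1)) • x + cst (ξ ⟨k, by omega⟩) := by
  have h : List.ofFn ξ = (List.ofFn ξ).take (k+1) := by
    rw [List.take_of_length_le (by simp)]
  rw [h, wordMap_take_eq ξ (by omega) le_rfl]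
  norm_num

lemma vol_ball {s : ℝ} (h0 : 0 < s) (h1 : s ≤ 1/2) :
    volume (ball (0 : UnitAddCircle) s) = ENNReal.ofReal (2*s) := by
  rw [← measure_congr AddCircle.closedBall_ae_eq_ball, AddCircle.volume_closedBall,
    min_eq_right (by linarith)]

/-- If `‖x‖ < r` (small), then `2^n • x + 1/2` stays away from `0`. -/
lemma fact1 {k : ℕ} {r : ℝ} (hr : 0 < r) (hr2 : 2^(k+2) * r < 1/2)
    {x : UnitAddCircle} (hx : ‖x‖ < r) {n : ℕ} (hn : n ≤ k+1) :
    r < ‖(2 ^ n) • x + cst true‖ := by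
  have h1 : ‖(2^n : ℕ) • x‖ ≤ (2^n : ℕ) * ‖x‖ := norm_nsmul_le
  have h2 : ((2:ℝ)^n) * ‖x‖ < 2^n * r :=
    mul_lt_mul_of_pos_left hx (by positivity)
  have h3 : (2:ℝ)^n * r ≤ 2^(k+1) * r :=
    mul_le_mul_of_nonneg_right (pow_le_pow_right₀ one_le_two hn) hr.le
  have h4 : (2:ℝ)^(k+2) = 2^(k+1) * 2 := by ring
  have h5 : ‖cst true‖ ≤ ‖(2 ^ n) • x + cst true‖ + ‖(2^n : ℕ) • x‖ := by
    have := norm_sub_le ((2 ^ n) • x + cst true) ((2^n : ℕ) • x)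
    rwa [add_sub_cancel_left] at this
  have h6 : ‖cst true‖ = 1/2 := by simpa [cst] using norm_half
  have hcast : ((2^n : ℕ) : ℝ) = (2:ℝ)^n := by push_cast; ring
  rw [h6] at h5
  rw [hcast] at h1
  have h7 : (1:ℝ) ≤ 2^(k+1) := one_le_pow₀ one_le_two
  nlinarith [norm_nonneg ((2 ^ n) • x)]

/-- If `‖x‖ < r` and `‖2^(k+1) • x‖ < r` then `‖x‖ < r / 2^(k+1)`. -/
lemma fact2 {k : ℕ} {r : ℝ} (hr : 0 < r) (hr2 : 2^(k+2) * r < 1/2)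
    {x : UnitAddCircle} (hx : ‖x‖ < r) (hfull : ‖(2 ^ (k+1)) • x‖ < r) :
    ‖x‖ < r / 2^(k+1) := by
  obtain ⟨t, rfl, habs, hnorm⟩ := lift_exists x
  have hsm : (2 ^ (k+1)) • ((t:ℝ) : UnitAddCircle) = ((2^(k+1) * t : ℝ) : UnitAddCircle) := by
    rw [nsmul_coe]; norm_num
  have habs2 : |2^(k+1) * t| ≤ 1/2 := by
    rw [abs_mul, abs_of_nonneg (by positivity : (0:ℝ) ≤ 2^(k+1))]
    have : (2:ℝ)^(k+1) * |t| < 2^(k+1) * r := by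
      apply mul_lt_mul_of_pos_left _ (by positivity)
      rwa [hnorm] at hx
    have h4 : (2:ℝ)^(k+2) = 2^(k+1) * 2 := by ring
    nlinarith
  have hn2 : ‖(2 ^ (k+1)) • ((t:ℝ) : UnitAddCircle)‖ = |2^(k+1) * t| := by
    rw [hsm, (AddCircle.norm_coe_eq_abs_iff (p := 1) one_ne_zero).2 (by simpa using habs2)]
  rw [hn2, abs_mul, abs_of_nonneg (by positivity : (0:ℝ) ≤ 2^(k+1))] at hfull
  rw [hnorm, lt_div_iff₀ (by positivity)]
  nlinarith
def goodWord (k : ℕ) : Fin (k+1) → Bool := fun j => decide (j.val < k)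

lemma nsmul_norm_lt {x : UnitAddCircle} {c : ℝ} (n : ℕ) (hx : ‖x‖ < c) :
    ‖(2 ^ n) • x‖ < 2^n * c := by
  have h1 : ‖(2^n : ℕ) • x‖ ≤ ((2^n : ℕ) : ℝ) * ‖x‖ := norm_nsmul_le
  have hcast : ((2^n : ℕ) : ℝ) = (2:ℝ)^n := by push_cast; ring
  rw [hcast] at h1
  nlinarith [pow_pos (zero_lt_two (α := ℝ)) n]

lemma good_set (k : ℕ) {r : ℝ} (hr : 0 < r) (hr2 : 2^(k+2) * r < 1/2) :
    ball (0 : UnitAddCircle) r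
      ∩ (⋂ j ∈ Finset.Icc 1 k,
          (wordMap (1/2) ((List.ofFn (goodWord k)).take j)) ⁻¹' (ball (0 : UnitAddCircle) r)ᶜ)
      ∩ (wordMap (1/2) (List.ofFn (goodWord k))) ⁻¹' ball (0 : UnitAddCircle) r
    = ball (0 : UnitAddCircle) (r / 2^(k+1)) := by
  have hlast : goodWord k ⟨k, by omega⟩ = false := by simp [goodWord]
  have h1le : (1:ℝ) ≤ 2^(k+1) := one_le_pow₀ one_le_two
  ext x
  simp only [mem_inter_iff, mem_iInter, mem_preimage, mem_compl_iff, mem_ball_zero_iff,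
    Finset.mem_Icc]
  constructor
  · rintro ⟨⟨hx, -⟩, hfin⟩
    rw [wordMap_full_eq, hlast] at hfin
    simp only [cst, Bool.false_eq_true, if_false, add_zero] at hfin
    exact fact2 hr hr2 hx hfin
  · intro hx
    have hxr : ‖x‖ < r := lt_of_lt_of_le hx (div_le_self hr.le h1le)
    refine ⟨⟨hxr, ?_⟩, ?_⟩
    · intro j hj
      rw [wordMap_take_eq (goodWord k) hj.1 (by omega)]
      have hg : goodWord k ⟨j-1, by omega⟩ = true := by
        simp only [goodWord, decide_eq_true_eq]; omega
      rw [hg]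
      exact not_lt.2 (fact1 hr hr2 hxr (by omega)).le
    · rw [wordMap_full_eq, hlast]
      simp only [cst, Bool.false_eq_true, if_false, add_zero]
      have := nsmul_norm_lt (k+1) hx
      calc ‖(2 ^ (k+1)) • x‖ < 2^(k+1) * (r / 2^(k+1)) := this
        _ = r := by field_simp

lemma bad_set (k : ℕ) (ξ : Fin (k+1) → Bool) (hξ : ξ ≠ goodWord k) {r : ℝ}
    (hr : 0 < r) (hr2 : 2^(k+2) * r < 1/2) :
    ball (0 : UnitAddCircle) r
      ∩ (⋂ j ∈ Finset.Icc 1 k,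
          (wordMap (1/2) ((List.ofFn ξ).take j)) ⁻¹' (ball (0 : UnitAddCircle) r)ᶜ)
      ∩ (wordMap (1/2) (List.ofFn ξ)) ⁻¹' ball (0 : UnitAddCircle) r
    = ∅ := by
  ext x
  simp only [mem_inter_iff, mem_iInter, mem_preimage, mem_compl_iff, mem_ball_zero_iff,
    Finset.mem_Icc, mem_empty_iff_false, iff_false]
  rintro ⟨⟨hx, hmid⟩, hfin⟩
  rw [wordMap_full_eq] at hfin
  by_cases hlast : ξ ⟨k, by omega⟩ = true
  · rw [hlast] at hfin
    exact absurd hfin (not_lt.2 (fact1 hr hr2 hx le_rfl).le)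
  · rw [Bool.not_eq_true] at hlast
    rw [hlast] at hfin
    simp only [cst, Bool.false_eq_true, if_false, add_zero] at hfin
    have hsmall : ‖x‖ < r / 2^(k+1) := fact2 hr hr2 hx hfin
    obtain ⟨i, hi⟩ := Function.ne_iff.1 hξ
    have hik : i.val < k := by
      rcases lt_or_eq_of_le (Nat.lt_succ_iff.1 i.2) with h | h
      · exact h
      · exfalso; apply hi
        have : i = ⟨k, by omega⟩ := Fin.ext h
        rw [this, hlast]; simp [goodWord]
    have hξi : ξ i = false := by
      have hgi : goodWord k i = true := by
        simp only [goodWord, decide_eq_true_eq]; exact hik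
      rw [hgi] at hi
      exact Bool.eq_false_iff.2 hi
    have hmid' := hmid (i.val + 1) ⟨by omega, by omega⟩
    apply hmid'
    rw [wordMap_take_eq ξ (by omega) (by omega)]
    have : ξ ⟨i.val + 1 - 1, by omega⟩ = false := by
      have he : (⟨i.val + 1 - 1, by omega⟩ : Fin (k+1)) = i := Fin.ext (by simp)
      rw [he]; exact hξi
    rw [this]
    simp only [cst, Bool.false_eq_true, if_false, add_zero]
    have h1 := nsmul_norm_lt (i.val+1) hsmall
    have h2 : (2:ℝ)^(i.val+1) * (r / 2^(k+1)) ≤ r := by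
      rw [div_eq_mul_inv, ← mul_assoc, mul_comm ((2:ℝ)^(i.val+1)) r, mul_assoc]
      nth_rewrite 2 [← mul_one r]
      apply mul_le_mul_of_nonneg_left _ hr.le
      rw [← div_eq_mul_inv, div_le_one (by positivity)]
      exact pow_le_pow_right₀ one_le_two (by omega)
    linarith
/-- Annealed Bernoulli(1/2,1/2) mixture of `f₀(x) = 2x` and `f₁(x) = 2x + 1/2` at the
target point `0`: for every `k ≥ 0` the cluster coefficient
`q_k = lim_{r→0⁺} Σ_{ξ ∈ {0,1}^{k+1}} 2^{-(k+1)}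
  λ(B(0,r) ∩ ⋂_{j=1}^k (F_ξ^j)⁻¹ B(0,r)ᶜ ∩ (F_ξ^{k+1})⁻¹ B(0,r)) / λ(B(0,r))`
equals `4^{-(k+1)}`. -/
theorem stmt8 (k : ℕ) :
    Tendsto (fun r : ℝ =>
      (∑ ξ : Fin (k+1) → Bool,
        (2⁻¹ : ℝ≥0∞)^(k+1) * volume (ball (0 : UnitAddCircle) r
          ∩ (⋂ j ∈ Finset.Icc 1 k,
              (wordMap (1/2) ((List.ofFn ξ).take j)) ⁻¹' (ball (0 : UnitAddCircle) r)ᶜ)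
          ∩ (wordMap (1/2) (List.ofFn ξ)) ⁻¹' ball (0 : UnitAddCircle) r))
        / volume (ball (0 : UnitAddCircle) r))
      (nhdsWithin 0 (Set.Ioi 0)) (nhds ((1/4 : ℝ≥0∞)^(k+1))) := by
  have hε : (0:ℝ) < ((2:ℝ)^(k+3))⁻¹ := by positivity
  refine Tendsto.congr' ?_ tendsto_const_nhds
  filter_upwards [Ioo_mem_nhdsGT_of_mem ⟨le_refl (0:ℝ), hε⟩] with r hr
  have hr0 : 0 < r := hr.1
  have hpow : (2:ℝ)^(k+3) = 2^(k+2) * 2 := by ring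
  have hr2 : 2^(k+2) * r < 1/2 := by
    have h1 : (2:ℝ)^(k+2) * r < 2^(k+2) * ((2:ℝ)^(k+3))⁻¹ :=
      mul_lt_mul_of_pos_left hr.2 (by positivity)
    have h2 : (2:ℝ)^(k+2) * ((2:ℝ)^(k+3))⁻¹ = 1/2 := by
      rw [hpow, mul_inv, ← mul_assoc, mul_inv_cancel₀ (by positivity)]
      norm_num
    linarith
  have h1le : (1:ℝ) ≤ 2^(k+1) := one_le_pow₀ one_le_two
  have h2le : (1:ℝ) ≤ 2^(k+2) := one_le_pow₀ one_le_two
  have hrhalf : r ≤ 1/2 := by nlinarith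
  rw [Finset.sum_eq_single (goodWord k)]
  · rw [good_set k hr0 hr2, vol_ball (by positivity) (by
      rw [div_le_iff₀ (by positivity : (0:ℝ) < 2^(k+1))]; nlinarith),
      vol_ball hr0 hrhalf]
    set V : ℝ≥0∞ := ENNReal.ofReal (2*r) with hV
    have hV0 : V ≠ 0 := by
      rw [hV]; simp only [ne_eq, ENNReal.ofReal_eq_zero, not_le]; linarith
    have hVt : V ≠ ⊤ := ENNReal.ofReal_ne_top
    have hsplit : ENNReal.ofReal (2*(r/2^(k+1))) = V * ((2:ℝ≥0∞)^(k+1))⁻¹ := by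
      rw [show 2*(r/2^(k+1)) = (2*r) * ((2:ℝ)^(k+1))⁻¹ by ring,
        ENNReal.ofReal_mul (by positivity), ENNReal.ofReal_inv_of_pos (by positivity),
        ENNReal.ofReal_pow (by norm_num), ENNReal.ofReal_ofNat]
    rw [hsplit, ENNReal.inv_pow]
    have h44 : ((1:ℝ≥0∞)/4)^(k+1) = (2⁻¹:ℝ≥0∞)^(k+1) * (2⁻¹:ℝ≥0∞)^(k+1) := by
      rw [← mul_pow]
      congr 1
      rw [← ENNReal.mul_inv (by norm_num) (by norm_num)]
      rw [one_div]; norm_num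
    rw [h44]
    calc (2⁻¹:ℝ≥0∞)^(k+1) * (2⁻¹:ℝ≥0∞)^(k+1)
        = (2⁻¹:ℝ≥0∞)^(k+1) * (2⁻¹:ℝ≥0∞)^(k+1) * (V / V) := by
          rw [ENNReal.div_self hV0 hVt, mul_one]
      _ = (2⁻¹:ℝ≥0∞)^(k+1) * (V * (2⁻¹:ℝ≥0∞)^(k+1)) / V := by
          rw [div_eq_mul_inv, div_eq_mul_inv]; ring
  · intro ξ _ hne
    rw [bad_set k ξ hne hr0 hr2, measure_empty, mul_zero]
  · intro h
    exact absurd (Finset.mem_univ _) h
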